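/- For any norm N on ℝ², the multiplicative Banach–Mazur distance from (ℝ², N) to (ℝ², ‖·‖₂) is at most √2. That is, there exists an invertible linear map S : ℝ² → ℝ² with ‖S‖·‖S⁻¹‖ ≤ √2, where the operator norms are taken from (ℝ², N) to (ℝ², ‖·‖₂) and back. -/

import Mathlib

/-- `N` is a norm on the real vector space `ℝ × ℝ` (i.e. `ℝ²`). -/
structure IsNorm (N : ℝ × ℝ → ℝ) : Prop where
  eq_zero_iff : ∀ v, N v = 0 ↔ v = 0
  smul : ∀ (c : ℝ) (v : ℝ × ℝ), N (c • v) = |c| * N v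
  add_le : ∀ v w, N (v + w) ≤ N v + N w

/-- The Euclidean norm `‖·‖₂` on `ℝ²`. -/
noncomputable def euclNorm : ℝ × ℝ → ℝ := fun v => Real.sqrt (v.1 ^ 2 + v.2 ^ 2)

/-- The operator norm of a linear map `L : (ℝ², M₁) → (ℝ², M₂)`, i.e.
`sup { M₂ (L v) : M₁ v = 1 }`. -/
noncomputable def opNorm (M₁ M₂ : ℝ × ℝ → ℝ) (L : (ℝ × ℝ) →ₗ[ℝ] (ℝ × ℝ)) : ℝ :=
  sSup {c | ∃ v, M₁ v = 1 ∧ c = M₂ (L v)}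

lemma eucl_nonneg (v : ℝ × ℝ) : 0 ≤ euclNorm v := Real.sqrt_nonneg _

lemma eucl_sq (v : ℝ × ℝ) : (euclNorm v)^2 = v.1^2 + v.2^2 := by
  rw [euclNorm, Real.sq_sqrt]; positivity

lemma eucl_eq_sqrt (v : ℝ × ℝ) : euclNorm v = Real.sqrt (v.1^2+v.2^2) := rfl

lemma eucl_le_of_sq_le {v : ℝ × ℝ} {t : ℝ} (ht : 0 ≤ t) (h : v.1^2 + v.2^2 ≤ t^2) :
    euclNorm v ≤ t := by
  rw [euclNorm]
  calc Real.sqrt (v.1^2+v.2^2) ≤ Real.sqrt (t^2) := Real.sqrt_le_sqrt h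
  _ = t := Real.sqrt_sq ht

lemma sq_le_of_eucl_le {v : ℝ × ℝ} {t : ℝ} (h : euclNorm v ≤ t) :
    v.1^2 + v.2^2 ≤ t^2 := by
  have := eucl_sq v
  nlinarith [eucl_nonneg v]

lemma eucl_smul (c : ℝ) (v : ℝ × ℝ) : euclNorm (c • v) = |c| * euclNorm v := by
  simp only [euclNorm, Prod.smul_fst, Prod.smul_snd, smul_eq_mul]
  rw [show (c*v.1)^2 + (c*v.2)^2 = c^2 * (v.1^2+v.2^2) by ring, Real.sqrt_mul (sq_nonneg c),
    Real.sqrt_sq_eq_abs]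

lemma eucl_one_zero : euclNorm (1, 0) = 1 := by
  simp [euclNorm]

lemma abs_fst_le_eucl (v : ℝ × ℝ) : |v.1| ≤ euclNorm v := by
  rw [euclNorm, ← Real.sqrt_sq_eq_abs]
  exact Real.sqrt_le_sqrt (by nlinarith [sq_nonneg v.2])

lemma abs_snd_le_eucl (v : ℝ × ℝ) : |v.2| ≤ euclNorm v := by
  rw [euclNorm, ← Real.sqrt_sq_eq_abs]
  exact Real.sqrt_le_sqrt (by nlinarith [sq_nonneg v.1])

lemma eucl_pos {v : ℝ × ℝ} (hv : v ≠ 0) : 0 < euclNorm v := by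
  rcases (eucl_nonneg v).lt_or_eq with h | h
  · exact h
  · exfalso
    apply hv
    have h2 := eucl_sq v
    rw [← h] at h2
    have h1 : v.1 = 0 := by nlinarith [sq_nonneg v.1, sq_nonneg v.2]
    have h2' : v.2 = 0 := by nlinarith [sq_nonneg v.1, sq_nonneg v.2]
    exact Prod.ext h1 h2'

variable {N : ℝ × ℝ → ℝ}

lemma N_zero (hN : IsNorm N) : N 0 = 0 := (hN.eq_zero_iff 0).2 rfl

lemma N_neg (hN : IsNorm N) (v : ℝ × ℝ) : N (-v) = N v := by
  have := hN.smul (-1) v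
  simpa using this

lemma N_nonneg (hN : IsNorm N) (v : ℝ × ℝ) : 0 ≤ N v := by
  have h := hN.add_le v (-v)
  rw [add_neg_cancel, N_zero hN, N_neg hN] at h
  linarith

lemma N_pos (hN : IsNorm N) {v : ℝ × ℝ} (hv : v ≠ 0) : 0 < N v :=
  lt_of_le_of_ne (N_nonneg hN v) (fun h => hv ((hN.eq_zero_iff v).1 h.symm))

lemma N_le_C (hN : IsNorm N) : ∀ v, N v ≤ (N (1,0) + N (0,1)) * euclNorm v := by
  intro v
  have hv : v = v.1 • ((1:ℝ),(0:ℝ)) + v.2 • ((0:ℝ),(1:ℝ)) := by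
    ext <;> simp
  calc N v ≤ N (v.1 • ((1:ℝ),(0:ℝ))) + N (v.2 • ((0:ℝ),(1:ℝ))) := by
        nth_rewrite 1 [hv]; exact hN.add_le _ _
  _ = |v.1| * N (1,0) + |v.2| * N (0,1) := by rw [hN.smul, hN.smul]
  _ ≤ euclNorm v * N (1,0) + euclNorm v * N (0,1) := by
        gcongr <;> first
          | exact N_nonneg hN _
          | exact abs_fst_le_eucl v
          | exact abs_snd_le_eucl v
  _ = (N (1,0) + N (0,1)) * euclNorm v := by ring

lemma N_sub_le (hN : IsNorm N) (u v : ℝ × ℝ) : N u - N v ≤ N (u - v) := by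
  have := hN.add_le (u - v) v
  simp only [sub_add_cancel] at this
  linarith

lemma N_lipschitz (hN : IsNorm N) : ∀ u v, |N u - N v| ≤ (N (1,0) + N (0,1)) * euclNorm (u - v) := by
  intro u v
  rw [abs_le]
  constructor
  · have h1 := N_sub_le hN v u
    have h2 := N_le_C hN (v - u)
    have : euclNorm (v - u) = euclNorm (u - v) := by
      have : v - u = (-1 : ℝ) • (u - v) := by module
      rw [this]
      show Real.sqrt _ = Real.sqrt _
      congr 1
      simp only [Prod.smul_fst, Prod.smul_snd, smul_eq_mul]
      ring
    rw [this] at h2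
    linarith
  · have h1 := N_sub_le hN u v
    have h2 := N_le_C hN (u - v)
    linarith

lemma N_continuous (hN : IsNorm N) : Continuous N := by
  set C := N (1,0) + N (0,1) with hC
  have hC0 : 0 ≤ C := by
    have := N_nonneg hN (1,0); have := N_nonneg hN (0,1); linarith
  apply (lipschitzWith_iff_dist_le_mul (K := Real.toNNReal (C * Real.sqrt 2))).2 ?_ |>.continuous
  intro u v
  rw [Real.dist_eq]
  have h1 := N_lipschitz hN u v
  have h2 : euclNorm (u - v) ≤ Real.sqrt 2 * dist u v := by
    have hd : dist u v = max |(u-v).1| |(u-v).2| := by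
      rw [Prod.dist_eq, Real.dist_eq, Real.dist_eq]
      rfl
    have e1 : |(u-v).1| ≤ dist u v := hd ▸ le_max_left _ _
    have e2 : |(u-v).2| ≤ dist u v := hd ▸ le_max_right _ _
    have hdnn : 0 ≤ dist u v := dist_nonneg
    rw [show euclNorm (u-v) = Real.sqrt ((u-v).1^2 + (u-v).2^2) from rfl]
    have p1 : (u-v).1^2 ≤ (dist u v)^2 := by
      rw [← sq_abs]; exact pow_le_pow_left₀ (abs_nonneg _) e1 2
    have p2 : (u-v).2^2 ≤ (dist u v)^2 := by
      rw [← sq_abs]; exact pow_le_pow_left₀ (abs_nonneg _) e2 2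
    have : (u-v).1^2 + (u-v).2^2 ≤ 2 * (dist u v)^2 := by linarith
    calc Real.sqrt ((u-v).1^2+(u-v).2^2) ≤ Real.sqrt (2 * (dist u v)^2) := Real.sqrt_le_sqrt this
    _ = Real.sqrt 2 * dist u v := by
        rw [Real.sqrt_mul (by norm_num), Real.sqrt_sq hdnn]
  have : |N u - N v| ≤ C * (Real.sqrt 2 * dist u v) := by
    calc |N u - N v| ≤ C * euclNorm (u - v) := h1
    _ ≤ C * (Real.sqrt 2 * dist u v) := by
        apply mul_le_mul_of_nonneg_left h2 hC0
    
  rw [Real.coe_toNNReal _ (by positivity)]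
  linarith [this]

lemma N_lower (hN : IsNorm N) : ∃ c : ℝ, 0 < c ∧ ∀ v, c * euclNorm v ≤ N v := by
  have hcpt : IsCompact {v : ℝ × ℝ | v.1^2 + v.2^2 = 1} := by
    apply Metric.isCompact_of_isClosed_isBounded
    · exact isClosed_eq (by continuity) continuous_const
    · rw [Metric.isBounded_iff_subset_closedBall 0]
      refine ⟨1, fun v hv => ?_⟩
      simp only [Metric.mem_closedBall, dist_zero_right]
      have : max |v.1| |v.2| ≤ 1 := by
        simp only [Set.mem_setOf_eq] at hv
        rw [max_le_iff]
        constructor <;> rw [abs_le] <;> constructor <;> nlinarith [sq_nonneg v.1, sq_nonneg v.2]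
      exact le_trans (le_of_eq rfl) this
  have hne : ({v : ℝ × ℝ | v.1^2 + v.2^2 = 1}).Nonempty := ⟨(1,0), by norm_num⟩
  obtain ⟨v₀, hv₀, hmin⟩ := hcpt.exists_isMinOn hne ((N_continuous hN).continuousOn)
  have hv₀ne : v₀ ≠ 0 := by
    intro h
    rw [h] at hv₀
    simp at hv₀
  refine ⟨N v₀, N_pos hN hv₀ne, fun v => ?_⟩
  rcases eq_or_ne v 0 with rfl | hv
  · simp [N_zero hN, show euclNorm 0 = 0 by simp [euclNorm]]
  · have he : 0 < euclNorm v := eucl_pos hv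
    set w := (euclNorm v)⁻¹ • v with hw
    have hwmem : w ∈ {v : ℝ × ℝ | v.1^2 + v.2^2 = 1} := by
      simp only [Set.mem_setOf_eq, hw, Prod.smul_fst, Prod.smul_snd, smul_eq_mul]
      have h2 : (euclNorm v)^2 = v.1^2 + v.2^2 := by
        rw [euclNorm, Real.sq_sqrt]; positivity
      field_simp
      linarith [h2]
    have hle0 : N v₀ ≤ N w := hmin hwmem
    have hNw : N w = (euclNorm v)⁻¹ * N v := by
      rw [hw, hN.smul, abs_of_pos (by positivity)]
    rw [hNw] at hle0
    have hmul := mul_le_mul_of_nonneg_right hle0 he.le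
    have heq : (euclNorm v)⁻¹ * N v * euclNorm v = N v := by field_simp
    rw [heq] at hmul
    exact hmul

set_option maxHeartbeats 2000000 in
lemma john_step {M : ℝ × ℝ → ℝ}
    (hsmul : ∀ (c : ℝ) v, M (c • v) = |c| * M v)
    (hadd : ∀ v w, M (v + w) ≤ M v + M w)
    (hle : ∀ v, M v ≤ euclNorm v)
    {p : ℝ × ℝ} (hp : M p = 1) (hr : 2 < p.1^2 + p.2^2) :
    ∃ u w : ℝ × ℝ, 1 < u.1 * w.2 - u.2 * w.1 ∧
      ∀ v : ℝ × ℝ, M (v.1 • u + v.2 • w) ≤ euclNorm v := by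
  obtain ⟨r2, hp12, hr2⟩ : ∃ r2, p.1^2 + p.2^2 = r2 ∧ 2 < r2 := ⟨_, rfl, hr⟩
  have hr2pos : (0:ℝ) < r2 := by linarith
  have hr21pos : (0:ℝ) < r2 - 1 := by linarith
  obtain ⟨r, hr_sq, hrpos⟩ : ∃ r, r^2 = r2 ∧ 0 < r :=
    ⟨Real.sqrt r2, Real.sq_sqrt hr2pos.le, Real.sqrt_pos.2 hr2pos⟩
  have hrne : r ≠ 0 := hrpos.ne'
  obtain ⟨a, ha2, hapos⟩ : ∃ a : ℝ, a^2 = r2/2 ∧ 0 < a :=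
    ⟨Real.sqrt (r2/2), Real.sq_sqrt (by positivity), Real.sqrt_pos.2 (by positivity)⟩
  obtain ⟨b, hb2, hbpos⟩ : ∃ b : ℝ, b^2 = r2/(2*(r2-1)) ∧ 0 < b :=
    ⟨Real.sqrt _, Real.sq_sqrt (by positivity), Real.sqrt_pos.2 (by positivity)⟩
  have hab : 1 < a * b := by
    have h2 : (a*b)^2 = r2^2/(4*(r2-1)) := by
      rw [mul_pow, ha2, hb2]; field_simp; ring
    have h3 : 1 < (a*b)^2 := by
      rw [h2, lt_div_iff₀ (by positivity)]
      nlinarith [mul_pos (show (0:ℝ) < r2 - 2 by linarith) (show (0:ℝ) < r2 - 2 by linarith)]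
    nlinarith [mul_pos hapos hbpos]
  refine ⟨(a/r) • p, (b/r) • (-p.2, p.1), ?_, ?_⟩
  · have : ((a/r) • p).1 * ((b/r) • (-p.2, p.1)).2 -
        ((a/r) • p).2 * ((b/r) • (-p.2, p.1)).1 = a * b := by
      simp only [Prod.smul_fst, Prod.smul_snd, smul_eq_mul]
      field_simp
      linear_combination hp12 - hr_sq
    rw [this]; exact hab
  · have helper : ∀ X Y : ℝ, ((X*p.1 - Y*p.2)/r)^2 + ((X*p.2 + Y*p.1)/r)^2 = X^2 + Y^2 := by
      intro X Y
      field_simp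
      linear_combination (X^2+Y^2) * hp12 - (X^2+Y^2) * hr_sq
    have key : ∀ s t : ℝ, s^2 + t^2 = 1 → 0 ≤ s →
        M (s • ((a/r) • p) + t • ((b/r) • (-p.2, p.1))) ≤ 1 := by
      intro s t hst hs
      obtain ⟨x, hxdef⟩ : ∃ x : ℝ, x = a*s := ⟨_, rfl⟩
      obtain ⟨y, hydef⟩ : ∃ y : ℝ, y = b*t := ⟨_, rfl⟩
      have hq : s • ((a/r) • p) + t • ((b/r) • (-p.2, p.1)) =
          ((x*p.1 - y*p.2)/r, (x*p.2 + y*p.1)/r) := by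
        rw [hxdef, hydef]
        ext <;> simp only [Prod.smul_fst, Prod.smul_snd, Prod.fst_add, Prod.snd_add,
          smul_eq_mul] <;> field_simp <;> ring
      rw [hq]; clear hq
      have hxnn : 0 ≤ x := by rw [hxdef]; exact mul_nonneg hapos.le hs
      have hx2 : x^2 = r2/2 * s^2 := by rw [hxdef, mul_pow, ha2]
      have hy2 : y^2 = r2/(2*(r2-1)) * t^2 := by rw [hydef, mul_pow, hb2]
      have ht2 : t^2 = 1 - s^2 := by linarith
      have hs1 : s ≤ 1 := by nlinarith [sq_nonneg t]
      have hxa : x ≤ a := by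
        rw [hxdef]
        nlinarith [hapos, hs1, hs]
      have har : a ≤ r := by nlinarith [ha2, hr_sq, hapos, hrpos, hr2]
      by_cases hcase : x * r ≤ 1
      · -- small x : the point is inside the unit disc
        have hxr2 : x^2 * r2 ≤ 1 := by
          nlinarith [hcase, mul_nonneg hxnn hrpos.le, hr_sq]
        have h4 : x^2 * r2 = r2^2 * s^2 / 2 := by rw [hx2]; ring
        have h5 : r2 * s^2 ≤ 1 := by nlinarith [hxr2, h4, hr2, mul_nonneg hr2pos.le (sq_nonneg s)]
        have hxy : x^2 + y^2 ≤ 1 := by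
          rw [hx2, hy2, ht2, ← sub_nonneg]
          rw [show 1 - (r2/2*s^2 + r2/(2*(r2-1))*(1-s^2)) =
            ((r2-2)*(1 - r2*s^2))/(2*(r2-1)) from by field_simp; ring]
          apply div_nonneg _ (by positivity)
          exact mul_nonneg (by linarith) (by linarith)
        apply le_trans (hle _)
        apply eucl_le_of_sq_le zero_le_one
        rw [helper x y]
        linarith
      · -- large x : convex combination with p
        push_neg at hcase
        obtain ⟨lam, hlamdef⟩ : ∃ lam : ℝ, lam = (r*x - 1)/(r2 - 1) := ⟨_, rfl⟩
        have hrx : 1 < r*x := by rw [mul_comm]; exact hcase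
        have hlam0 : 0 ≤ lam := by
          rw [hlamdef]
          exact div_nonneg (by linarith) hr21pos.le
        have hlam1 : lam ≤ 1 := by
          rw [hlamdef, div_le_one hr21pos]
          nlinarith [hxa, har, hrpos, hr_sq]
        have hMlp : M (lam • p) = lam := by rw [hsmul, hp, abs_of_nonneg hlam0, mul_one]
        have hy2' : y^2 * (r2-1) ≤ (r - x)^2 := by
          have heq : y^2 * (r2-1) = r2/2 - x^2 := by
            rw [hy2, ht2, hx2]; field_simp
          rw [heq]
          nlinarith [sq_nonneg (2*x - r), hr_sq]
        have e1 : x - lam*r = (r - x)/(r2-1) := by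
          rw [hlamdef]; field_simp; linear_combination (-x) * hr_sq
        have e2 : 1 - lam = r*(r - x)/(r2-1) := by
          rw [hlamdef]; field_simp; linear_combination (-1 : ℝ) * hr_sq
        have hkey2 : (x - lam*r)^2 + y^2 ≤ (1 - lam)^2 := by
          rw [e1, e2, ← sub_nonneg]
          rw [show (r*(r-x)/(r2-1))^2 - (((r-x)/(r2-1))^2 + y^2) =
            (r^2*(r-x)^2 - (r-x)^2 - y^2*(r2-1)^2)/((r2-1)^2) from by field_simp; ring]
          apply div_nonneg _ (by positivity)
          nlinarith [mul_le_mul_of_nonneg_left hy2' hr21pos.le, hr_sq]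
        have hsplit : ((x*p.1 - y*p.2)/r, (x*p.2 + y*p.1)/r) =
            lam • p + (((x - lam*r)*p.1 - y*p.2)/r, ((x - lam*r)*p.2 + y*p.1)/r) := by
          ext <;> simp only [Prod.smul_fst, Prod.smul_snd, Prod.fst_add, Prod.snd_add,
            smul_eq_mul] <;> field_simp <;> ring
        have step2 : M (((x - lam*r)*p.1 - y*p.2)/r, ((x - lam*r)*p.2 + y*p.1)/r) ≤ 1 - lam := by
          apply le_trans (hle _)
          apply eucl_le_of_sq_le (by linarith)
          rw [helper (x - lam*r) y]
          exact hkey2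
        calc M ((x*p.1 - y*p.2)/r, (x*p.2 + y*p.1)/r)
            ≤ M (lam • p) + M (((x - lam*r)*p.1 - y*p.2)/r, ((x - lam*r)*p.2 + y*p.1)/r) := by
              rw [hsplit]; exact hadd _ _
        _ ≤ lam + (1 - lam) := by rw [hMlp]; linarith [step2]
        _ = 1 := by ring
    -- general v by homogeneity and symmetry
    intro v
    rcases eq_or_ne v 0 with rfl | hv
    · have hM0 : M 0 = 0 := by
        have := hsmul 0 0; simpa using this
      simp only [Prod.fst_zero, Prod.snd_zero, zero_smul, add_zero, hM0]
      exact eucl_nonneg 0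
    · have he : 0 < euclNorm v := eucl_pos hv
      obtain ⟨c, hcdef, hcpos⟩ : ∃ c, c = euclNorm v ∧ 0 < c := ⟨_, rfl, he⟩
      have hcsq : c^2 = v.1^2 + v.2^2 := by rw [hcdef]; exact eucl_sq v
      have hst : (v.1/c)^2 + (v.2/c)^2 = 1 := by
        field_simp
        linarith
      have hv' : v.1 • ((a/r) • p) + v.2 • ((b/r) • (-p.2, p.1)) =
          c • ((v.1/c) • ((a/r) • p) + (v.2/c) • ((b/r) • (-p.2, p.1))) := by
        ext <;> simp only [Prod.smul_fst, Prod.smul_snd, Prod.fst_add, Prod.snd_add,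
          smul_eq_mul] <;> field_simp <;> ring
      rw [hv', hsmul, abs_of_pos hcpos, ← hcdef]
      rcases le_or_gt 0 (v.1/c) with hs | hs
      · have := key (v.1/c) (v.2/c) hst hs
        nlinarith
      · have hneg : (v.1/c) • ((a/r) • p) + (v.2/c) • ((b/r) • (-p.2, p.1)) =
            -((-(v.1/c)) • ((a/r) • p) + (-(v.2/c)) • ((b/r) • (-p.2, p.1))) := by
          module
        have hst' : (-(v.1/c))^2 + (-(v.2/c))^2 = 1 := by
          rw [neg_pow, neg_pow]; simpa using hst
        have hkey := key (-(v.1/c)) (-(v.2/c)) hst' (by linarith)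
        rw [hneg]
        have hMneg : ∀ z : ℝ × ℝ, M (-z) = M z := by
          intro z
          have := hsmul (-1) z
          simpa using this
        rw [hMneg]
        nlinarith

noncomputable def Lmap (u w : ℝ × ℝ) : (ℝ × ℝ) →ₗ[ℝ] (ℝ × ℝ) where
  toFun v := v.1 • u + v.2 • w
  map_add' x y := by
    ext <;> simp only [Prod.smul_fst, Prod.smul_snd, Prod.fst_add, Prod.snd_add,
      smul_eq_mul] <;> ring
  map_smul' c x := by
    ext <;> simp only [Prod.smul_fst, Prod.smul_snd, Prod.fst_add, Prod.snd_add,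
      smul_eq_mul, RingHom.id_apply] <;> ring

lemma Lmap_apply (u w v : ℝ × ℝ) : Lmap u w v = v.1 • u + v.2 • w := rfl

-- John's theorem in dimension two: for any norm `N` on `ℝ²`, there is an invertible linear
-- map `S : (ℝ², N) → (ℝ², ‖·‖₂)` with `‖S‖ ⬝ ‖S⁻¹‖ ≤ √2`.
set_option maxHeartbeats 1000000 in
theorem stmt2 (N : ℝ × ℝ → ℝ) (hN : IsNorm N) :
    ∃ S : (ℝ × ℝ) ≃ₗ[ℝ] (ℝ × ℝ),
      opNorm N euclNorm S.toLinearMap * opNorm euclNorm N S.symm.toLinearMap ≤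
        Real.sqrt 2 := by
  obtain ⟨c, hcpos, hclow⟩ := N_lower hN
  set C : ℝ := N (1,0) + N (0,1) with hCdef
  have hCpos : 0 < C := by
    have h1 : 0 < N (1,0) := N_pos hN (by simp [Prod.ext_iff])
    have h2 : 0 ≤ N (0,1) := N_nonneg hN _
    rw [hCdef]; linarith
  set K : Set ((ℝ × ℝ) × (ℝ × ℝ)) :=
    {z | ∀ v : ℝ × ℝ, N (v.1 • z.1 + v.2 • z.2) ≤ euclNorm v} with hKdef
  have hKclosed : IsClosed K := by
    have : K = ⋂ v : ℝ × ℝ, {z : (ℝ × ℝ) × (ℝ × ℝ) | N (v.1 • z.1 + v.2 • z.2) ≤ euclNorm v} := by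
      ext z; simp [hKdef, Set.mem_iInter]
    rw [this]
    refine isClosed_iInter fun v => isClosed_le ?_ continuous_const
    exact (N_continuous hN).comp (by fun_prop)
  have hKbdd : Bornology.IsBounded K := by
    rw [Metric.isBounded_iff_subset_closedBall 0]
    refine ⟨1/c, fun z hz => ?_⟩
    simp only [Metric.mem_closedBall, dist_zero_right]
    have hb : ∀ y : ℝ × ℝ, N y ≤ 1 → ‖y‖ ≤ 1/c := by
      intro y hy
      have h1 : c * euclNorm y ≤ 1 := le_trans (hclow y) hy
      have h2 : euclNorm y ≤ 1/c := by
        rw [le_div_iff₀ hcpos]; linarith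
      have h3 : ‖y‖ = max |y.1| |y.2| := rfl
      rw [h3, max_le_iff]
      exact ⟨le_trans (abs_fst_le_eucl y) h2, le_trans (abs_snd_le_eucl y) h2⟩
    have hz1 : N z.1 ≤ 1 := by
      have := hz ((1:ℝ), (0:ℝ))
      simpa [eucl_one_zero] using this
    have hz2 : N z.2 ≤ 1 := by
      have := hz ((0:ℝ), (1:ℝ))
      have he : euclNorm ((0:ℝ),(1:ℝ)) = 1 := by
        show Real.sqrt _ = 1; norm_num
      simpa [he] using this
    have : ‖z‖ = max ‖z.1‖ ‖z.2‖ := rfl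
    rw [this, max_le_iff]
    exact ⟨hb z.1 hz1, hb z.2 hz2⟩
  have hKcompact : IsCompact K := Metric.isCompact_of_isClosed_isBounded hKclosed hKbdd
  set F : ((ℝ × ℝ) × (ℝ × ℝ)) → ℝ := fun z => |z.1.1 * z.2.2 - z.1.2 * z.2.1| with hFdef
  have hFcont : Continuous F := by
    apply _root_.continuous_abs.comp
    fun_prop
  have hz₀mem : ((1/C, (0:ℝ)), ((0:ℝ), 1/C)) ∈ K := by
    intro v
    have : v.1 • ((1/C : ℝ), (0:ℝ)) + v.2 • ((0:ℝ), (1/C : ℝ)) = (1/C) • v := by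
      ext <;> simp <;> ring
    rw [this, hN.smul, abs_of_pos (by positivity)]
    calc (1/C) * N v ≤ (1/C) * (C * euclNorm v) := by
          have := N_le_C hN v
          apply mul_le_mul_of_nonneg_left _ (by positivity)
          rw [hCdef]; exact this
    _ = euclNorm v := by field_simp
  obtain ⟨z₀, hz₀K, hz₀max⟩ := hKcompact.exists_isMaxOn ⟨_, hz₀mem⟩ hFcont.continuousOn
  set u₀ : ℝ × ℝ := z₀.1 with hu₀def
  set w₀ : ℝ × ℝ := z₀.2 with hw₀def
  set d : ℝ := u₀.1 * w₀.2 - u₀.2 * w₀.1 with hddef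
  have hdlow : (1/C)^2 ≤ |d| := by
    have := hz₀max hz₀mem
    simp only [hFdef] at this
    calc (1/C)^2 = |1/C * (1/C) - 0 * 0| := by
          rw [sq]; simp [abs_of_pos (show (0:ℝ) < 1/C by positivity), abs_of_pos hCpos]
    _ ≤ |d| := this
  have hdne : d ≠ 0 := by
    intro h
    rw [h, abs_zero] at hdlow
    have : (0:ℝ) < (1/C)^2 := by positivity
    linarith
  set M : ℝ × ℝ → ℝ := fun v => N (v.1 • u₀ + v.2 • w₀) with hMdef
  have hMsmul : ∀ (a : ℝ) v, M (a • v) = |a| * M v := by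
    intro a v
    have : (a • v).1 • u₀ + (a • v).2 • w₀ = a • (v.1 • u₀ + v.2 • w₀) := by
      ext <;> simp <;> ring
    rw [hMdef]; simp only []; rw [this, hN.smul]
  have hMadd : ∀ v w, M (v + w) ≤ M v + M w := by
    intro v w
    have : (v + w).1 • u₀ + (v + w).2 • w₀ =
        (v.1 • u₀ + v.2 • w₀) + (w.1 • u₀ + w.2 • w₀) := by
      ext <;> simp <;> ring
    rw [hMdef]; simp only []; rw [this]
    exact hN.add_le _ _
  have hMle : ∀ v, M v ≤ euclNorm v := fun v => hz₀K v
  have hMdet : ∀ u w : ℝ × ℝ, (∀ v : ℝ × ℝ, M (v.1 • u + v.2 • w) ≤ euclNorm v) →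
      |u.1 * w.2 - u.2 * w.1| ≤ 1 := by
    intro u w h
    have hmem : (u.1 • u₀ + u.2 • w₀, w.1 • u₀ + w.2 • w₀) ∈ K := by
      intro v
      have heq : v.1 • (u.1 • u₀ + u.2 • w₀) + v.2 • (w.1 • u₀ + w.2 • w₀) =
          (v.1 • u + v.2 • w).1 • u₀ + (v.1 • u + v.2 • w).2 • w₀ := by
        ext <;> simp <;> ring
      rw [heq]
      exact h v
    have hcomp : (u.1 • u₀ + u.2 • w₀).1 * (w.1 • u₀ + w.2 • w₀).2 -
        (u.1 • u₀ + u.2 • w₀).2 * (w.1 • u₀ + w.2 • w₀).1 = d * (u.1 * w.2 - u.2 * w.1) := by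
      simp only [Prod.smul_fst, Prod.smul_snd, Prod.fst_add, Prod.snd_add, smul_eq_mul, hddef]
      ring
    have hF' : F (u.1 • u₀ + u.2 • w₀, w.1 • u₀ + w.2 • w₀) ≤ F z₀ := hz₀max hmem
    have hFeq1 : F (u.1 • u₀ + u.2 • w₀, w.1 • u₀ + w.2 • w₀) = |d * (u.1*w.2 - u.2*w.1)| := by
      simp only [hFdef]
      exact congrArg abs hcomp
    have hFeq2 : F z₀ = |d| := rfl
    rw [hFeq1, hFeq2, abs_mul] at hF'
    have hdpos : 0 < |d| := abs_pos.2 hdne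
    exact le_of_mul_le_mul_left (by linarith : |d| * |u.1*w.2 - u.2*w.1| ≤ |d| * 1) hdpos
  -- John's step : the euclidean norm is at most √2 times M
  have hjohn : ∀ v : ℝ × ℝ, euclNorm v ≤ Real.sqrt 2 * M v := by
    by_contra hcon
    push_neg at hcon
    obtain ⟨v, hv⟩ := hcon
    have hvne : v ≠ 0 := by
      intro h
      rw [h] at hv
      have h0 : M (0 : ℝ × ℝ) = 0 := by
        have := hMsmul 0 0
        simpa using this
      rw [h0, mul_zero] at hv
      have : euclNorm 0 = 0 := by
        rw [show (0 : ℝ × ℝ) = (0:ℝ) • (0 : ℝ × ℝ) by simp, eucl_smul]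
        simp
      linarith [this.symm.le, hv]
    have hMvpos : 0 < M v := by
      rcases (N_nonneg hN (v.1 • u₀ + v.2 • w₀)).lt_or_eq with hpos | hzero
      · exact hpos
      · exfalso
        have hLv0 : v.1 • u₀ + v.2 • w₀ = 0 := (hN.eq_zero_iff _).1 hzero.symm
        have h1 : v.1 * u₀.1 + v.2 * w₀.1 = 0 := congrArg Prod.fst hLv0
        have h2 : v.1 * u₀.2 + v.2 * w₀.2 = 0 := congrArg Prod.snd hLv0
        have hd1 : d * v.1 = 0 := by
          rw [hddef]; linear_combination w₀.2 * h1 - w₀.1 * h2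
        have hd2 : d * v.2 = 0 := by
          rw [hddef]; linear_combination (- u₀.2) * h1 + u₀.1 * h2
        have hv1 : v.1 = 0 := by
          rcases mul_eq_zero.1 hd1 with h | h
          · exact absurd h hdne
          · exact h
        have hv2 : v.2 = 0 := by
          rcases mul_eq_zero.1 hd2 with h | h
          · exact absurd h hdne
          · exact h
        exact hvne (Prod.ext hv1 hv2)
    set p : ℝ × ℝ := (1 / M v) • v with hpdef
    have hMp : M p = 1 := by
      rw [hpdef, hMsmul, abs_of_pos (by positivity)]
      field_simp
    have heup : euclNorm p = euclNorm v / M v := by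
      rw [hpdef, eucl_smul, abs_of_pos (by positivity)]
      ring
    have hppos : Real.sqrt 2 < euclNorm p := by
      rw [heup, lt_div_iff₀ hMvpos]
      linarith
    have hp2 : 2 < p.1^2 + p.2^2 := by
      have h1 := eucl_sq p
      have h2 : (Real.sqrt 2)^2 = 2 := Real.sq_sqrt (by norm_num)
      nlinarith [Real.sqrt_nonneg 2, eucl_nonneg p]
    obtain ⟨u, w, hdet, hcond⟩ := john_step hMsmul hMadd hMle hMp hp2
    have := hMdet u w hcond
    have : 1 < |u.1 * w.2 - u.2 * w.1| := lt_of_lt_of_le hdet (le_abs_self _)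
    linarith [hMdet u w hcond]
  -- Build the linear equivalence
  have hcompLR : ∀ v : ℝ × ℝ,
      Lmap u₀ w₀ (Lmap (w₀.2/d, -u₀.2/d) (-w₀.1/d, u₀.1/d) v) = v := by
    intro v
    simp only [Lmap_apply]
    ext <;> simp only [Prod.smul_fst, Prod.smul_snd, Prod.fst_add, Prod.snd_add,
      smul_eq_mul] <;> field_simp <;> rw [hddef] <;> ring
  have hcompRL : ∀ v : ℝ × ℝ,
      Lmap (w₀.2/d, -u₀.2/d) (-w₀.1/d, u₀.1/d) (Lmap u₀ w₀ v) = v := by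
    intro v
    simp only [Lmap_apply]
    ext <;> simp only [Prod.smul_fst, Prod.smul_snd, Prod.fst_add, Prod.snd_add,
      smul_eq_mul] <;> field_simp <;> rw [hddef] <;> ring
  set Linv : (ℝ × ℝ) →ₗ[ℝ] (ℝ × ℝ) := Lmap (w₀.2/d, -u₀.2/d) (-w₀.1/d, u₀.1/d) with hLinvdef
  refine ⟨LinearEquiv.ofLinear Linv (Lmap u₀ w₀)
    (LinearMap.ext hcompRL) (LinearMap.ext hcompLR), ?_⟩
  have hTo : (LinearEquiv.ofLinear Linv (Lmap u₀ w₀)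
      (LinearMap.ext hcompRL) (LinearMap.ext hcompLR)).toLinearMap = Linv := rfl
  have hSymm : (LinearEquiv.ofLinear Linv (Lmap u₀ w₀)
      (LinearMap.ext hcompRL) (LinearMap.ext hcompLR)).symm.toLinearMap = Lmap u₀ w₀ := rfl
  rw [hTo, hSymm]
  -- bound the two operator norms
  have hM_eq : ∀ v : ℝ × ℝ, M v = N (Lmap u₀ w₀ v) := fun v => rfl
  have hbound1 : ∀ x ∈ {cv | ∃ v, N v = 1 ∧ cv = euclNorm (Linv v)}, x ≤ Real.sqrt 2 := by
    rintro x ⟨v, hNv, rfl⟩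
    have hM : M (Linv v) = 1 := by
      rw [hM_eq, hcompLR v, hNv]
    calc euclNorm (Linv v) ≤ Real.sqrt 2 * M (Linv v) := hjohn _
    _ = Real.sqrt 2 := by rw [hM, mul_one]
  have hop1 : opNorm N euclNorm Linv ≤ Real.sqrt 2 :=
    Real.sSup_le hbound1 (Real.sqrt_nonneg 2)
  have hbound2 : ∀ x ∈ {cv | ∃ v, euclNorm v = 1 ∧ cv = N (Lmap u₀ w₀ v)}, x ≤ 1 := by
    rintro x ⟨v, hev, rfl⟩
    calc N (Lmap u₀ w₀ v) = M v := (hM_eq v).symm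
    _ ≤ euclNorm v := hMle v
    _ = 1 := hev
  have hop2 : opNorm euclNorm N (Lmap u₀ w₀) ≤ 1 := Real.sSup_le hbound2 zero_le_one
  have hop1nn : 0 ≤ opNorm N euclNorm Linv := by
    have hN10 : 0 < N (1,0) := N_pos hN (by simp [Prod.ext_iff])
    have hvex : N ((1 / N (1,0)) • ((1:ℝ),(0:ℝ))) = 1 := by
      rw [hN.smul, abs_of_pos (by positivity)]
      field_simp
    have hmem : euclNorm (Linv ((1 / N (1,0)) • ((1:ℝ),(0:ℝ)))) ∈
        {cv | ∃ v, N v = 1 ∧ cv = euclNorm (Linv v)} := ⟨_, hvex, rfl⟩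
    have hbdd : BddAbove {cv | ∃ v, N v = 1 ∧ cv = euclNorm (Linv v)} :=
      ⟨Real.sqrt 2, hbound1⟩
    exact le_trans (eucl_nonneg _) (le_csSup hbdd hmem)
  have hop2nn : 0 ≤ opNorm euclNorm N (Lmap u₀ w₀) := by
    have hmem : N (Lmap u₀ w₀ ((1:ℝ),(0:ℝ))) ∈
        {cv | ∃ v, euclNorm v = 1 ∧ cv = N (Lmap u₀ w₀ v)} := ⟨_, eucl_one_zero, rfl⟩
    have hbdd : BddAbove {cv | ∃ v, euclNorm v = 1 ∧ cv = N (Lmap u₀ w₀ v)} :=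
      ⟨1, hbound2⟩
    exact le_trans (N_nonneg hN _) (le_csSup hbdd hmem)
  calc opNorm N euclNorm Linv * opNorm euclNorm N (Lmap u₀ w₀)
      ≤ Real.sqrt 2 * 1 := mul_le_mul hop1 hop2 hop2nn (Real.sqrt_nonneg 2)
  _ = Real.sqrt 2 := mul_one _
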